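/- There is no 3-connected locally nonforesty graph of order 8k+5 (k ≥ 1) and size 15k+10. -/

import Mathlib

open SimpleGraph

lemma cycle_two_nbrs_start {V : Type*} {G : SimpleGraph V} {x : V} (c : G.Walk x x)
    (hc : c.IsCycle) :
    ∃ y z, y ∈ c.support ∧ z ∈ c.support ∧ y ≠ z ∧ G.Adj x y ∧ G.Adj x z := by
  have h3 := hc.three_le_length
  cases c with
  | nil => exact absurd rfl hc.ne_nil
  | cons h q =>
    rename_i y
    rw [SimpleGraph.Walk.cons_isCycle_iff] at hc
    obtain ⟨hq, hxy⟩ := hc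
    simp only [Walk.length_cons] at h3
    have hlen : 2 ≤ q.length := by omega
    have hqr : q.reverse.IsPath := hq.reverse
    cases hq' : q.reverse with
    | nil =>
      exact absurd h (G.irrefl)
    | cons hz r =>
      rename_i z
      rw [hq'] at hqr
      rw [Walk.cons_isPath_iff] at hqr
      have hzy : z ≠ y := by
        rintro rfl
        have : r = Walk.nil := (Walk.isPath_iff_eq_nil (p := r)).mp hqr.1
        have hl : q.reverse.length = 1 := by rw [hq', this]; simp
        rw [Walk.length_reverse] at hl
        omega
      refine ⟨y, z, ?_, ?_, hzy.symm, h, hz⟩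
      · simp [Walk.support_cons, Walk.start_mem_support]
      · have : z ∈ q.reverse.support := by
          rw [hq']; simp [Walk.support_cons, Walk.start_mem_support]
        rw [Walk.support_reverse, List.mem_reverse] at this
        simp [Walk.support_cons, this]

lemma cycle_two_nbrs {V : Type*} [DecidableEq V] {G : SimpleGraph V} {v x : V} (c : G.Walk v v)
    (hc : c.IsCycle) (hx : x ∈ c.support) :
    ∃ y z, y ∈ c.support ∧ z ∈ c.support ∧ y ≠ z ∧ G.Adj x y ∧ G.Adj x z := by
  obtain ⟨y, z, hy, hz, hyz, a1, a2⟩ := cycle_two_nbrs_start (c.rotate x hx) (hc.rotate hx)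
  have hperm := c.support_rotate x hx
  have memconv : ∀ w, w ∈ (c.rotate x hx).support → w ∈ c.support := by
    intro w hw
    rw [Walk.support_eq_cons] at hw
    rcases List.mem_cons.mp hw with (rfl | hw)
    · exact hx
    · exact List.mem_of_mem_tail (hperm.mem_iff.mp hw)
  exact ⟨y, z, memconv _ hy, memconv _ hz, hyz, a1, a2⟩

lemma exists_cycle_struct {V : Type*} [DecidableEq V] {G : SimpleGraph V} {s : Set V}
    (h : ¬ (G.induce s).IsAcyclic) :
    ∃ C : Finset V, (∀ x ∈ C, x ∈ s) ∧ 3 ≤ C.card ∧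
      ∀ x ∈ C, ∃ y ∈ C, ∃ z ∈ C, y ≠ z ∧ G.Adj x y ∧ G.Adj x z := by
  rw [IsAcyclic] at h
  push_neg at h
  obtain ⟨v, c, hc⟩ := h
  refine ⟨(c.support.map Subtype.val).toFinset, ?_, ?_, ?_⟩
  · intro x hx
    rw [List.mem_toFinset, List.mem_map] at hx
    obtain ⟨a, _, rfl⟩ := hx
    exact a.2
  · have h1 : c.support.tail.Nodup := hc.2
    have h2 : c.support.tail.length = c.length := by
      have := Walk.length_support c; rw [Walk.support_eq_cons] at this; simpa using this
    have h3 : 3 ≤ c.support.tail.toFinset.card := by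
      rw [List.toFinset_card_of_nodup h1, h2]; exact hc.three_le_length
    calc 3 ≤ c.support.tail.toFinset.card := h3
      _ ≤ (c.support.map Subtype.val).toFinset.card := by
          apply Finset.card_le_card_of_injOn Subtype.val
          · intro a ha
            rw [Finset.mem_coe, List.mem_toFinset] at ha
            rw [Finset.mem_coe, List.mem_toFinset, List.mem_map]
            exact ⟨a, List.mem_of_mem_tail ha, rfl⟩
          · exact Subtype.val_injective.injOn
  · intro x hx
    rw [List.mem_toFinset, List.mem_map] at hx
    obtain ⟨a, ha, rfl⟩ := hx
    obtain ⟨y, z, hy, hz, hyz, a1, a2⟩ := cycle_two_nbrs c hc ha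
    refine ⟨y.1, ?_, z.1, ?_, ?_, ?_, ?_⟩
    · rw [List.mem_toFinset, List.mem_map]; exact ⟨y, hy, rfl⟩
    · rw [List.mem_toFinset, List.mem_map]; exact ⟨z, hz, rfl⟩
    · exact fun hh => hyz (Subtype.ext hh)
    · exact a1
    · exact a2

def LocallyNonforesty {V : Type*} (G : SimpleGraph V) : Prop :=
  ∀ v : V, ¬ (G.induce (G.neighborSet v)).IsAcyclic

def ThreeConnected {V : Type*} [Fintype V] (G : SimpleGraph V) : Prop :=
  4 ≤ Fintype.card V ∧ ∀ S : Finset V, S.card ≤ 2 → (G.induce ((↑S : Set V)ᶜ)).Connected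

lemma cut_lemma {n : ℕ} {G : SimpleGraph (Fin n)} (h3 : ThreeConnected G)
    (S : Finset (Fin n)) (hS : S.card ≤ 2) (D : Finset (Fin n))
    (hclosed : ∀ d ∈ D, ∀ w, G.Adj d w → w ∈ D ∪ S)
    (d0 : Fin n) (hd0 : d0 ∈ D) (hd0S : d0 ∉ S)
    (hsmall : (D ∪ S).card < n) : False := by
  have hconn := h3.2 S hS
  obtain ⟨v0, hv0⟩ : ∃ v0, v0 ∉ D ∪ S := by
    by_contra hh
    push_neg at hh
    have : Finset.univ ⊆ D ∪ S := fun x _ => hh x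
    have := Finset.card_le_card this
    simp at this
    omega
  have hv0D : v0 ∉ D := fun h => hv0 (Finset.mem_union_left _ h)
  have hv0S : v0 ∉ S := fun h => hv0 (Finset.mem_union_right _ h)
  set T : Set (Fin n) := (↑S : Set (Fin n))ᶜ with hT
  have hd0T : d0 ∈ T := by simp [hT, hd0S]
  have hv0T : v0 ∈ T := by simp [hT, hv0S]
  have hreach := hconn.preconnected ⟨d0, hd0T⟩ ⟨v0, hv0T⟩
  obtain ⟨w⟩ := hreach
  have key : ∀ (a b : T) (p : (G.induce T).Walk a b), (a : Fin n) ∈ D → (b : Fin n) ∈ D := by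
    intro a b p
    induction p with
    | nil => exact id
    | @cons u c b huc p ih =>
      intro hu
      apply ih
      have hadj : G.Adj u.1 c.1 := huc
      have := hclosed _ hu _ hadj
      rcases Finset.mem_union.mp this with h' | h'
      · exact h'
      · refine absurd h' ?_
        have hc2 := c.2
        simp only [hT, Set.mem_compl_iff, Finset.mem_coe] at hc2
        exact hc2
  exact hv0D (key _ _ w hd0)
open SimpleGraph Finset Walk in
set_option maxHeartbeats 2000000 in
theorem stmt13 (k : ℕ) (hk : 1 ≤ k) :
    ¬ ∃ G : SimpleGraph (Fin (8 * k + 5)), ThreeConnected G ∧ LocallyNonforesty G ∧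
      G.edgeSet.ncard = 15 * k + 10 := by
  rintro ⟨G, h3, hloc, hm⟩
  classical
  have hn13 : 13 ≤ 8 * k + 5 := by omega
  -- extract cycle structure in each neighborhood
  have cyc : ∀ v : Fin (8 * k + 5), ∃ C : Finset (Fin (8 * k + 5)),
      (∀ x ∈ C, G.Adj v x) ∧ 3 ≤ C.card ∧
      ∀ x ∈ C, ∃ y ∈ C, ∃ z ∈ C, y ≠ z ∧ G.Adj x y ∧ G.Adj x z := by
    intro v
    obtain ⟨C, h1, h2, h3'⟩ := exists_cycle_struct (hloc v)
    exact ⟨C, fun x hx => h1 x hx, h2, h3'⟩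
  have hdeg3 : ∀ v, 3 ≤ G.degree v := by
    intro v
    obtain ⟨C, h1, h2, _⟩ := cyc v
    calc 3 ≤ C.card := h2
      _ ≤ (G.neighborFinset v).card := Finset.card_le_card (fun x hx => by
            rw [mem_neighborFinset]; exact h1 x hx)
  -- every neighborhood of a degree-3 vertex is a triangle
  have htri : ∀ u, G.degree u = 3 → ∀ x y, G.Adj u x → G.Adj u y → x ≠ y → G.Adj x y := by
    intro u hu x y hx hy hxy
    obtain ⟨C, h1, h2, hstr⟩ := cyc u
    have hCN : C = G.neighborFinset u := by
      apply Finset.eq_of_subset_of_card_le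
      · intro w hw; rw [mem_neighborFinset]; exact h1 w hw
      · rw [show (G.neighborFinset u).card = G.degree u from rfl, hu]; exact h2
    have hxC : x ∈ C := by rw [hCN, mem_neighborFinset]; exact hx
    have hyC : y ∈ C := by rw [hCN, mem_neighborFinset]; exact hy
    have hCcard : C.card = 3 := by rw [hCN]; exact hu
    obtain ⟨y1, hy1, y2, hy2, hy12, a1, a2⟩ := hstr x hxC
    have hsub : ({y1, y2} : Finset _) ⊆ C \ {x} := by
      intro w hw
      rw [Finset.mem_sdiff, Finset.mem_singleton]
      rcases Finset.mem_insert.mp hw with rfl | hw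
      · exact ⟨hy1, (a1.ne').symm ∘ Eq.symm⟩
      · rw [Finset.mem_singleton] at hw; subst hw
        exact ⟨hy2, (a2.ne').symm ∘ Eq.symm⟩
    have hcard2 : (C \ {x}).card = 2 := by
      rw [Finset.card_sdiff_of_subset (by simpa using hxC), hCcard]; simp
    have heq : ({y1, y2} : Finset _) = C \ {x} := by
      apply Finset.eq_of_subset_of_card_le hsub
      rw [hcard2, Finset.card_insert_of_notMem (by simpa using hy12), Finset.card_singleton]
    have hyin : y ∈ ({y1, y2} : Finset _) := by
      rw [heq, Finset.mem_sdiff, Finset.mem_singleton]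
      exact ⟨hyC, fun h => hxy h.symm⟩
    rcases Finset.mem_insert.mp hyin with rfl | hy'
    · exact a1
    · rw [Finset.mem_singleton] at hy'; subst hy'; exact a2

  have hcard3 : ∀ x y z : Fin (8 * k + 5), x ≠ y → x ≠ z → y ≠ z →
      ({x, y, z} : Finset (Fin (8 * k + 5))).card = 3 := by
    intro x y z h1 h2 h3'
    rw [Finset.card_insert_of_notMem (by simp [h1, h2]),
        Finset.card_insert_of_notMem (by simp [h3']), Finset.card_singleton]
  have htriple : ∀ u x, G.degree u = 3 → G.Adj u x → ∃ y z,
      y ≠ z ∧ x ≠ y ∧ x ≠ z ∧ G.neighborFinset u = {x, y, z} ∧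
      G.Adj u y ∧ G.Adj u z ∧ G.Adj x y ∧ G.Adj x z ∧ G.Adj y z := by
    intro u x hu hx
    have hxm : x ∈ G.neighborFinset u := by rw [mem_neighborFinset]; exact hx
    have hcard : (G.neighborFinset u \ {x}).card = 2 := by
      rw [Finset.card_sdiff_of_subset (by simpa using hxm),
          show (G.neighborFinset u).card = G.degree u from rfl, hu, Finset.card_singleton]
    obtain ⟨y, z, hyz, hset⟩ := Finset.card_eq_two.mp hcard
    have hym : y ∈ G.neighborFinset u ∧ y ≠ x := by
      have : y ∈ G.neighborFinset u \ {x} := by rw [hset]; simp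
      simpa [Finset.mem_sdiff] using this
    have hzm : z ∈ G.neighborFinset u ∧ z ≠ x := by
      have : z ∈ G.neighborFinset u \ {x} := by rw [hset]; simp
      simpa [Finset.mem_sdiff] using this
    have huy : G.Adj u y := by rw [← mem_neighborFinset]; exact hym.1
    have huz : G.Adj u z := by rw [← mem_neighborFinset]; exact hzm.1
    have hNu : G.neighborFinset u = {x, y, z} := by
      symm
      apply Finset.eq_of_subset_of_card_le
      · intro w hw
        rcases Finset.mem_insert.mp hw with rfl | hw
        · exact hxm
        · rcases Finset.mem_insert.mp hw with rfl | hw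
          · exact hym.1
          · rw [Finset.mem_singleton] at hw; subst hw; exact hzm.1
      · rw [show (G.neighborFinset u).card = G.degree u from rfl, hu,
          hcard3 x y z (Ne.symm hym.2) (Ne.symm hzm.2) hyz]
    exact ⟨y, z, hyz, Ne.symm hym.2, Ne.symm hzm.2, hNu, huy, huz,
      htri u hu x y hx huy (Ne.symm hym.2), htri u hu x z hx huz (Ne.symm hzm.2),
      htri u hu y z huy huz hyz⟩
  have hindep : ∀ u v, G.degree u = 3 → G.Adj u v → G.degree v ≠ 3 := by
    intro u v hu huv hv
    obtain ⟨x, y, hxy, hvx, hvy, hNu, hux, huy, hvx', hvy', hxy'⟩ := htriple u v hu huv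
    have hNv : G.neighborFinset v = {u, x, y} := by
      symm
      apply Finset.eq_of_subset_of_card_le
      · intro w hw
        rw [mem_neighborFinset]
        rcases Finset.mem_insert.mp hw with rfl | hw
        · exact huv.symm
        · rcases Finset.mem_insert.mp hw with rfl | hw
          · exact hvx'
          · rw [Finset.mem_singleton] at hw; subst hw; exact hvy'
      · rw [show (G.neighborFinset v).card = G.degree v from rfl, hv,
          hcard3 u x y hux.ne huy.ne hxy]
    refine cut_lemma h3 {x, y} ?_ {u, v} ?_ u (by simp) ?_ ?_
    · exact le_trans (Finset.card_insert_le _ _) (by simp)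
    · intro d hd w hw
      rw [Finset.mem_union]
      rcases Finset.mem_insert.mp hd with rfl | hd
      · have : w ∈ G.neighborFinset d := by rw [mem_neighborFinset]; exact hw
        rw [hNu] at this
        rcases Finset.mem_insert.mp this with rfl | this
        · exact Or.inl (by simp)
        · exact Or.inr this
      · rw [Finset.mem_singleton] at hd; subst hd
        have : w ∈ G.neighborFinset d := by rw [mem_neighborFinset]; exact hw
        rw [hNv] at this
        rcases Finset.mem_insert.mp this with rfl | this
        · exact Or.inl (by simp)
        · exact Or.inr this
    · simp only [Finset.mem_insert, Finset.mem_singleton]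
      push_neg
      exact ⟨hux.ne, huy.ne⟩
    · have h3' : (({u, v} ∪ {x, y} : Finset (Fin (8 * k + 5)))).card ≤ 4 := by
        refine le_trans (Finset.card_union_le _ _) ?_
        have c1 : ({u, v} : Finset (Fin (8 * k + 5))).card ≤ 2 :=
          le_trans (Finset.card_insert_le _ _) (by simp)
        have c2 : ({x, y} : Finset (Fin (8 * k + 5))).card ≤ 2 :=
          le_trans (Finset.card_insert_le _ _) (by simp)
        omega
      omega

  -- sets A (degree-3) and B, and the A-neighbor count s
  set A : Finset (Fin (8*k+5)) := Finset.univ.filter (fun v => G.degree v = 3) with hA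
  set B : Finset (Fin (8*k+5)) := Finset.univ.filter (fun v => G.degree v ≠ 3) with hB
  set s : Fin (8*k+5) → ℕ :=
    fun x => ((G.neighborFinset x).filter (fun u => G.degree u = 3)).card with hs
  have hABcard : A.card + B.card = 8*k+5 := by
    rw [hA, hB]
    rw [Finset.card_filter_add_card_filter_not]
    simp
  have hef : G.edgeFinset.card = 15*k+10 := by
    have h1 := Set.ncard_coe_finset G.edgeFinset
    rw [coe_edgeFinset] at h1
    omega
  have hsum_deg : ∑ v, G.degree v = 2 * (15*k+10) := by
    rw [← hef]; exact G.sum_degrees_eq_twice_card_edges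
  have hsumA : ∑ v ∈ A, G.degree v = 3 * A.card := by
    have hall : ∀ v ∈ A, G.degree v = 3 := fun v hv => by
      rw [hA, Finset.mem_filter] at hv; exact hv.2
    calc ∑ v ∈ A, G.degree v = ∑ _v ∈ A, 3 := Finset.sum_congr rfl hall
      _ = 3 * A.card := by rw [Finset.sum_const, smul_eq_mul]; ring
  have hdB : ∑ x ∈ B, G.degree x + 3 * A.card = 30*k + 20 := by
    have h1 := Finset.sum_filter_add_sum_filter_not Finset.univ
      (fun v => G.degree v = 3) (fun v => G.degree v)
    rw [← hA, ← hB] at h1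
    rw [hsumA] at h1
    omega
  have hsB : ∑ x ∈ B, s x = 3 * A.card := by
    have h1 : ∀ x, s x = ∑ u ∈ A, if G.Adj x u then 1 else 0 := by
      intro x
      simp only [hs]
      have he : (G.neighborFinset x).filter (fun u => G.degree u = 3)
          = A.filter (fun u => G.Adj x u) := by
        ext u
        simp only [hA, Finset.mem_filter, mem_neighborFinset, Finset.mem_univ, true_and]
        tauto
      rw [he, Finset.card_filter]
    have h2 : ∀ u ∈ A, (B.filter (fun x => G.Adj x u)).card = G.degree u := by
      intro u hu
      have hu3 : G.degree u = 3 := by rw [hA, Finset.mem_filter] at hu; exact hu.2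
      have he : B.filter (fun x => G.Adj x u) = G.neighborFinset u := by
        ext w
        simp only [hB, Finset.mem_filter, Finset.mem_univ, true_and, mem_neighborFinset]
        constructor
        · rintro ⟨-, h⟩; exact h.symm
        · intro h; exact ⟨hindep u w hu3 h, h.symm⟩
      rw [he]; rfl
    calc ∑ x ∈ B, s x = ∑ x ∈ B, ∑ u ∈ A, if G.Adj x u then 1 else 0 :=
          Finset.sum_congr rfl (fun x _ => h1 x)
      _ = ∑ u ∈ A, ∑ x ∈ B, if G.Adj x u then 1 else 0 := Finset.sum_comm
      _ = ∑ u ∈ A, G.degree u := Finset.sum_congr rfl (fun u hu => by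
            rw [← Finset.card_filter]; exact h2 u hu)
      _ = 3 * A.card := hsumA
  have hsum_c : ∑ x ∈ B, ((4:ℤ) * G.degree x - 15 - s x) = 5 := by
    have e1 : ∑ x ∈ B, ((4:ℤ) * G.degree x - 15 - s x)
        = 4 * ((∑ x ∈ B, G.degree x : ℕ) : ℤ) - 15 * (B.card : ℤ)
          - ((∑ x ∈ B, s x : ℕ) : ℤ) := by
      rw [Finset.sum_sub_distrib, Finset.sum_sub_distrib, ← Finset.mul_sum, Finset.sum_const]
      push_cast
      ring
    rw [e1, hsB]
    omega

  have hBpair : ∀ x : Fin (8*k+5), ∃ b1 b2, b1 ≠ b2 ∧ G.Adj x b1 ∧ G.Adj x b2 ∧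
      G.degree b1 ≠ 3 ∧ G.degree b2 ≠ 3 := by
    intro x
    obtain ⟨C, h1, h2, hstr⟩ := cyc x
    obtain ⟨c1, hc1⟩ := Finset.card_pos.mp (by omega : 0 < C.card)
    have hstep : ∀ w ∈ C, G.degree w = 3 → ∃ b1 b2, b1 ≠ b2 ∧ G.Adj x b1 ∧ G.Adj x b2 ∧
        G.degree b1 ≠ 3 ∧ G.degree b2 ≠ 3 := by
      intro w hw hw3
      obtain ⟨y1, hy1, y2, hy2, hy12, a1, a2⟩ := hstr w hw
      exact ⟨y1, y2, hy12, h1 y1 hy1, h1 y2 hy2, hindep w y1 hw3 a1, hindep w y2 hw3 a2⟩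
    by_cases hd1 : G.degree c1 = 3
    · exact hstep c1 hc1 hd1
    · obtain ⟨y1, hy1, y2, hy2, hy12, a1, a2⟩ := hstr c1 hc1
      by_cases hdy1 : G.degree y1 = 3
      · exact hstep y1 hy1 hdy1
      · by_cases hdy2 : G.degree y2 = 3
        · exact hstep y2 hy2 hdy2
        · exact ⟨y1, y2, hy12, h1 y1 hy1, h1 y2 hy2, hdy1, hdy2⟩
  have hs_le2 : ∀ x, s x + 2 ≤ G.degree x := by
    intro x
    obtain ⟨b1, b2, ne, a1, a2, d1, d2⟩ := hBpair x
    have hsub : (G.neighborFinset x).filter (fun u => G.degree u = 3)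
        ⊆ (G.neighborFinset x) \ {b1, b2} := by
      intro w hw
      rw [Finset.mem_filter] at hw
      rw [Finset.mem_sdiff]
      refine ⟨hw.1, ?_⟩
      simp only [Finset.mem_insert, Finset.mem_singleton]
      push_neg
      constructor
      · rintro rfl; exact d1 hw.2
      · rintro rfl; exact d2 hw.2
    have hcc := Finset.card_le_card hsub
    have hpair : ({b1, b2} : Finset (Fin (8*k+5))) ⊆ G.neighborFinset x := by
      intro w hw
      rcases Finset.mem_insert.mp hw with rfl | hw
      · rw [mem_neighborFinset]; exact a1
      · rw [Finset.mem_singleton] at hw; subst hw; rw [mem_neighborFinset]; exact a2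
    have hcs : ((G.neighborFinset x) \ {b1,b2}).card = G.degree x - 2 := by
      rw [Finset.card_sdiff_of_subset hpair]
      rw [Finset.card_insert_of_notMem (by simpa using ne), Finset.card_singleton]
      rfl
    have hd := hdeg3 x
    have hsx : s x = ((G.neighborFinset x).filter (fun u => G.degree u = 3)).card := by
      simp only [hs]
    omega
  have hcard4 : ∀ a b c d : Fin (8*k+5), a ≠ b → a ≠ c → a ≠ d → b ≠ c → b ≠ d → c ≠ d →
      ({a, b, c, d} : Finset (Fin (8*k+5))).card = 4 := by
    intro a b c d h1 h2 h3' h4 h5 h6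
    rw [Finset.card_insert_of_notMem (by simp [h1, h2, h3']), hcard3 b c d h4 h5 h6]
  -- a vertex adjacent to a degree-3 vertex u (with x in u's triangle) has s ≥ 1 etc.
  have hs_mem : ∀ x u, G.degree u = 3 → G.Adj x u → 1 ≤ s x := by
    intro x u hu hxu
    have : u ∈ (G.neighborFinset x).filter (fun w => G.degree w = 3) := by
      rw [Finset.mem_filter, mem_neighborFinset]; exact ⟨hxu, hu⟩
    have := Finset.card_pos.mpr ⟨u, this⟩
    simp only [hs]
    omega
  have hs4 : ∀ x, G.degree x = 4 → s x ≤ 1 := by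
    intro x hx4
    by_contra hcon
    push_neg at hcon
    have h2lt : 1 < ((G.neighborFinset x).filter (fun u => G.degree u = 3)).card := by
      have : s x = ((G.neighborFinset x).filter (fun u => G.degree u = 3)).card := by
        simp only [hs]
      omega
    obtain ⟨u, hu, v, hv, huv⟩ := Finset.one_lt_card.mp h2lt
    rw [Finset.mem_filter, mem_neighborFinset] at hu hv
    obtain ⟨hxu, hu3⟩ := hu
    obtain ⟨hxv, hv3⟩ := hv
    obtain ⟨y, z, hyz, hxy, hxz, hNu, huy, huz, haxy, haxz, hayz⟩ :=
      htriple u x hu3 hxu.symm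
    -- basic distinctness
    have hvy : v ≠ y := by
      rintro rfl
      exact hindep u v hu3 huy hv3
    have hvz : v ≠ z := by
      rintro rfl
      exact hindep u v hu3 huz hv3
    have huny : u ≠ y := huy.ne
    have hunz : u ≠ z := huz.ne
    have hunv : u ≠ v := huv
    have hvnx : v ≠ x := hxv.ne'
    have hunx : u ≠ x := hxu.ne'
    -- every neighbor of v is in {x,y,z}
    have hNv : ∀ w, G.Adj v w → w = x ∨ w = y ∨ w = z := by
      intro w hw
      by_contra hcon2
      push_neg at hcon2
      obtain ⟨w1, w2, w3⟩ := hcon2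
      have hwx : G.Adj x w := (htri v hv3 w x hw hxv.symm w1).symm
      -- {u,v,y,z,w} ⊆ NF x
      have hsub : ({u, v, y, z, w} : Finset (Fin (8*k+5))) ⊆ G.neighborFinset x := by
        intro t ht
        rw [mem_neighborFinset]
        simp only [Finset.mem_insert, Finset.mem_singleton] at ht
        rcases ht with rfl | rfl | rfl | rfl | rfl
        · exact hxu
        · exact hxv
        · exact haxy
        · exact haxz
        · exact hwx
      have hwu : w ≠ u := by
        rintro rfl
        exact hindep v w hv3 hw hu3
      have hwv : w ≠ v := hw.ne'
      have hcard5 : ({u, v, y, z, w} : Finset (Fin (8*k+5))).card = 5 := by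
        rw [Finset.card_insert_of_notMem (by simp [hunv, huny, hunz, Ne.symm hwu]),
          hcard4 v y z w hvy hvz (Ne.symm hwv) hyz (fun h => w2 h.symm) (fun h => w3 h.symm)]
      have := Finset.card_le_card hsub
      rw [hcard5] at this
      rw [show (G.neighborFinset x).card = G.degree x from rfl, hx4] at this
      omega
    -- NF x = {u,v,y,z}
    have hNx : ∀ w, G.Adj x w → w = u ∨ w = v ∨ w = y ∨ w = z := by
      intro w hw
      have hsub : ({u, v, y, z} : Finset (Fin (8*k+5))) ⊆ G.neighborFinset x := by
        intro t ht
        rw [mem_neighborFinset]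
        simp only [Finset.mem_insert, Finset.mem_singleton] at ht
        rcases ht with rfl | rfl | rfl | rfl
        · exact hxu
        · exact hxv
        · exact haxy
        · exact haxz
      have heq : ({u, v, y, z} : Finset (Fin (8*k+5))) = G.neighborFinset x := by
        apply Finset.eq_of_subset_of_card_le hsub
        rw [show (G.neighborFinset x).card = G.degree x from rfl, hx4,
          hcard4 u v y z hunv huny hunz hvy hvz hyz]
      have : w ∈ G.neighborFinset x := by rw [mem_neighborFinset]; exact hw
      rw [← heq] at this
      simpa using this
    -- cut with D = {u,v,x}, S = {y,z}
    refine cut_lemma h3 {y, z} ?_ {u, v, x} ?_ u (by simp) ?_ ?_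
    · exact le_trans (Finset.card_insert_le _ _) (by simp)
    · intro d hd w hw
      rw [Finset.mem_union]
      simp only [Finset.mem_insert, Finset.mem_singleton] at hd
      rcases hd with rfl | rfl | rfl
      · have : w ∈ G.neighborFinset d := by rw [mem_neighborFinset]; exact hw
        rw [hNu] at this
        simp only [Finset.mem_insert, Finset.mem_singleton] at this
        rcases this with rfl | rfl | rfl
        · exact Or.inl (by simp)
        · exact Or.inr (by simp)
        · exact Or.inr (by simp)
      · rcases hNv w hw with rfl | rfl | rfl
        · exact Or.inl (by simp)
        · exact Or.inr (by simp)
        · exact Or.inr (by simp)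
      · rcases hNx w hw with rfl | rfl | rfl | rfl
        · exact Or.inl (by simp)
        · exact Or.inl (by simp)
        · exact Or.inr (by simp)
        · exact Or.inr (by simp)
    · simp only [Finset.mem_insert, Finset.mem_singleton]
      push_neg
      exact ⟨huny, hunz⟩
    · have hb1 : (({u, v, x} ∪ {y, z} : Finset (Fin (8*k+5)))).card ≤ 5 := by
        refine le_trans (Finset.card_union_le _ _) ?_
        have c1 : ({u, v, x} : Finset (Fin (8*k+5))).card ≤ 3 :=
          le_trans (Finset.card_insert_le _ _)
            (by exact Nat.succ_le_succ (le_trans (Finset.card_insert_le _ _) (by simp)))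
        have c2 : ({y, z} : Finset (Fin (8*k+5))).card ≤ 2 :=
          le_trans (Finset.card_insert_le _ _) (by simp)
        omega
      omega

  have hBdeg : ∀ x ∈ B, 4 ≤ G.degree x := by
    intro x hx
    rw [hB, Finset.mem_filter] at hx
    have := hdeg3 x
    omega
  have hBmem : ∀ x : Fin (8*k+5), G.degree x ≠ 3 → x ∈ B := by
    intro x hx; rw [hB, Finset.mem_filter]; exact ⟨Finset.mem_univ x, hx⟩
  have hc0 : ∀ x ∈ B, (0:ℤ) ≤ 4 * G.degree x - 15 - s x := by
    intro x hx
    have h4 := hBdeg x hx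
    have h5 := hs_le2 x
    by_cases hd : G.degree x = 4
    · have := hs4 x hd
      omega
    · omega
  have hsum_subset : ∀ (T : Finset (Fin (8*k+5))), T ⊆ B →
      ∑ x ∈ T, (4 * (G.degree x:ℤ) - 15 - s x) ≤ 5 := by
    intro T hT
    rw [← hsum_c]
    exact Finset.sum_le_sum_of_subset_of_nonneg hT (fun i hi _ => hc0 i hi)
  have hc5 : ∀ x ∈ B, (4:ℤ) * G.degree x - 15 - s x ≤ 5 := by
    intro x hx
    have := hsum_subset {x} (by simpa using hx)
    simpa using this
  have hsA : ∀ x, G.degree x = 3 → s x = 0 := by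
    intro x hx
    simp only [hs]
    rw [Finset.card_eq_zero, Finset.filter_eq_empty_iff]
    intro u hu
    rw [mem_neighborFinset] at hu
    exact hindep x u hx hu
  have hs_two : ∀ t u v, u ≠ v → G.degree u = 3 → G.degree v = 3 →
      G.Adj t u → G.Adj t v → 2 ≤ s t := by
    intro t u v huv hu hv h1 h2
    have hsub : ({u, v} : Finset (Fin (8*k+5))) ⊆
        (G.neighborFinset t).filter (fun w => G.degree w = 3) := by
      intro w hw
      rw [Finset.mem_filter, mem_neighborFinset]
      rcases Finset.mem_insert.mp hw with rfl | hw
      · exact ⟨h1, hu⟩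
      · rw [Finset.mem_singleton] at hw; subst hw; exact ⟨h2, hv⟩
    have := Finset.card_le_card hsub
    rw [Finset.card_insert_of_notMem (by simpa using huv), Finset.card_singleton] at this
    simp only [hs]
    omega
  -- Step beta: s ≤ 1 everywhere
  have hs1 : ∀ x, s x ≤ 1 := by
    have hdeg5 : ∀ x, 2 ≤ s x → G.degree x ≠ 3 ∧ 5 ≤ G.degree x := by
      intro x h2
      have hne3 : G.degree x ≠ 3 := by
        intro h; rw [hsA x h] at h2; omega
      have hne4 : G.degree x ≠ 4 := by
        intro h; have := hs4 x h; omega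
      have := hdeg3 x
      exact ⟨hne3, by omega⟩
    have hkey : ∀ x, 2 ≤ s x → ∃ x', x' ≠ x ∧ G.Adj x x' ∧ 2 ≤ s x' := by
      intro x h2
      by_contra hcon
      push_neg at hcon
      set F := (G.neighborFinset x).filter (fun u => G.degree u = 3) with hF
      have hFs : F.card = s x := by simp only [hs, hF]
      have hFdeg : ∀ u ∈ F, G.degree u = 3 ∧ G.Adj x u := by
        intro u hu
        rw [hF, Finset.mem_filter, mem_neighborFinset] at hu
        exact ⟨hu.2, hu.1⟩
      have hdisj : ∀ u1 ∈ F, ∀ u2 ∈ F, u1 ≠ u2 →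
          Disjoint (G.neighborFinset u1 \ {x}) (G.neighborFinset u2 \ {x}) := by
        intro u1 h1 u2 h2' h12
        rw [Finset.disjoint_left]
        intro t ht1 ht2
        rw [Finset.mem_sdiff, mem_neighborFinset, Finset.mem_singleton] at ht1 ht2
        have hst : 2 ≤ s t := hs_two t u1 u2 h12 (hFdeg u1 h1).1 (hFdeg u2 h2').1
          ht1.1.symm ht2.1.symm
        have htx : G.Adj x t := by
          refine htri u1 (hFdeg u1 h1).1 t x ht1.1 ((hFdeg u1 h1).2.symm) ht1.2 |>.symm
        exact absurd hst (by have := hcon t (fun h => by subst h; exact ht1.2 rfl) htx; omega)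
      have hUcard : (F.biUnion (fun u => G.neighborFinset u \ {x})).card = 2 * s x := by
        rw [Finset.card_biUnion hdisj]
        rw [Finset.sum_congr rfl (fun u hu => ?_), Finset.sum_const, smul_eq_mul, hFs, mul_comm]
        have hux : x ∈ G.neighborFinset u := by
          rw [mem_neighborFinset]; exact (hFdeg u hu).2.symm
        rw [Finset.card_sdiff_of_subset (by simpa using hux), Finset.card_singleton,
          show (G.neighborFinset u).card = G.degree u from rfl, (hFdeg u hu).1]
      have hsub : F ∪ F.biUnion (fun u => G.neighborFinset u \ {x}) ⊆ G.neighborFinset x := by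
        intro t ht
        rw [mem_neighborFinset]
        rcases Finset.mem_union.mp ht with ht | ht
        · exact (hFdeg t ht).2
        · rw [Finset.mem_biUnion] at ht
          obtain ⟨u, hu, ht⟩ := ht
          rw [Finset.mem_sdiff, mem_neighborFinset, Finset.mem_singleton] at ht
          exact htri u (hFdeg u hu).1 t x ht.1 (hFdeg u hu).2.symm ht.2 |>.symm
      have hFdisjU : Disjoint F (F.biUnion (fun u => G.neighborFinset u \ {x})) := by
        rw [Finset.disjoint_left]
        intro t htF htU
        rw [Finset.mem_biUnion] at htU
        obtain ⟨u, hu, ht⟩ := htU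
        rw [Finset.mem_sdiff, mem_neighborFinset] at ht
        exact hindep u t (hFdeg u hu).1 ht.1 (hFdeg t htF).1
      have hcount := Finset.card_le_card hsub
      rw [Finset.card_union_of_disjoint hFdisjU, hUcard, hFs] at hcount
      have hxB : x ∈ B := hBmem x (hdeg5 x h2).1
      have := hc5 x hxB
      have hdx : (G.neighborFinset x).card = G.degree x := rfl
      omega
    by_contra hcon
    push_neg at hcon
    obtain ⟨x0, hx0⟩ := hcon
    have hx02 : 2 ≤ s x0 := hx0
    obtain ⟨x1, hne, hadj, hx12⟩ := hkey x0 hx02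
    have hx0B : x0 ∈ B := hBmem x0 (hdeg5 x0 hx02).1
    have hx1B : x1 ∈ B := hBmem x1 (hdeg5 x1 hx12).1
    have h50 := (hdeg5 x0 hx02).2
    have h51 := (hdeg5 x1 hx12).2
    have hpairsum : (4 * (G.degree x0:ℤ) - 15 - s x0) + (4 * (G.degree x1:ℤ) - 15 - s x1) ≤ 5 := by
      have := hsum_subset {x0, x1} (by
        intro t ht
        rcases Finset.mem_insert.mp ht with rfl | ht
        · exact hx0B
        · rw [Finset.mem_singleton] at ht; subst ht; exact hx1B)
      rw [Finset.sum_pair (Ne.symm hne)] at this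
      exact this
    -- one of them has degree 5 and s = 3
    have hw1 : ∃ w1 w2, w1 ≠ w2 ∧ 2 ≤ s w2 ∧ G.degree w1 = 5 ∧ s w1 = 3 ∧
        (∀ y, 2 ≤ s y → y = w1 ∨ y = w2) := by
      have hc2x0 : (2:ℤ) ≤ 4 * G.degree x0 - 15 - s x0 := by
        have := hs_le2 x0; omega
      have hc2x1 : (2:ℤ) ≤ 4 * G.degree x1 - 15 - s x1 := by
        have := hs_le2 x1; omega
      have honly : ∀ y, 2 ≤ s y → y = x0 ∨ y = x1 := by
        intro y hy
        by_contra hcy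
        push_neg at hcy
        have hyB : y ∈ B := hBmem y (hdeg5 y hy).1
        have h5y := (hdeg5 y hy).2
        have hc2y : (2:ℤ) ≤ 4 * G.degree y - 15 - s y := by
          have := hs_le2 y; omega
        have := hsum_subset {y, x0, x1} (by
          intro t ht
          simp only [Finset.mem_insert, Finset.mem_singleton] at ht
          rcases ht with rfl | rfl | rfl
          · exact hyB
          · exact hx0B
          · exact hx1B)
        rw [Finset.sum_insert (by simp [hcy.1, hcy.2]),
          Finset.sum_pair (Ne.symm hne)] at this
        omega
      rcases le_or_gt (4 * (G.degree x0:ℤ) - 15 - s x0) 2 with hle | hlt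
      · refine ⟨x0, x1, hne.symm, hx12, ?_, ?_, fun y hy => honly y hy⟩
        · have := hs_le2 x0; omega
        · have := hs_le2 x0; omega
      · refine ⟨x1, x0, hne, hx02, ?_, ?_, fun y hy => by
          rcases honly y hy with rfl | rfl
          · exact Or.inr rfl
          · exact Or.inl rfl⟩
        · have := hs_le2 x1; omega
        · have := hs_le2 x1; omega
    obtain ⟨w1, w2, hw12, hsw2, hdw1, hsw1, honly⟩ := hw1
    -- three degree-3 neighbors of w1
    have hF1 : ((G.neighborFinset w1).filter (fun u => G.degree u = 3)).card = 3 := by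
      have : s w1 = ((G.neighborFinset w1).filter (fun u => G.degree u = 3)).card := by
        simp only [hs]
      omega
    obtain ⟨u1, u2, u3, h12, h13, h23, hFeq⟩ := Finset.card_eq_three.mp hF1
    have hmemF : ∀ u, u ∈ ({u1, u2, u3} : Finset (Fin (8*k+5))) →
        G.degree u = 3 ∧ G.Adj u w1 := by
      intro u hu
      rw [← hFeq, Finset.mem_filter, mem_neighborFinset] at hu
      exact ⟨hu.2, hu.1.symm⟩
    have pick : ∀ u, G.degree u = 3 → G.Adj u w1 →
        ∃ t, t ≠ w2 ∧ t ≠ w1 ∧ G.Adj w1 t ∧ G.Adj u t ∧ G.degree t ≠ 3 := by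
      intro u hu had
      obtain ⟨y, z, hyz, h1, h2, hN, huy, huz, hw1y, hw1z, _⟩ := htriple u w1 hu had
      by_cases hcw : y = w2
      · refine ⟨z, ?_, Ne.symm h2, hw1z, huz, hindep u z hu huz⟩
        rintro rfl; exact hyz hcw
      · exact ⟨y, hcw, Ne.symm h1, hw1y, huy, hindep u y hu huy⟩
    obtain ⟨t1, ht1w2, ht1w1, hw1t1, hu1t1, ht1d⟩ :=
      pick u1 (hmemF u1 (by simp)).1 (hmemF u1 (by simp)).2
    obtain ⟨t2, ht2w2, ht2w1, hw1t2, hu2t2, ht2d⟩ :=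
      pick u2 (hmemF u2 (by simp)).1 (hmemF u2 (by simp)).2
    obtain ⟨t3, ht3w2, ht3w1, hw1t3, hu3t3, ht3d⟩ :=
      pick u3 (hmemF u3 (by simp)).1 (hmemF u3 (by simp)).2
    have htdist : ∀ ti tj ui uj, ti ≠ w1 → ti ≠ w2 → ui ≠ uj →
        G.degree ui = 3 → G.degree uj = 3 → G.Adj ui ti → G.Adj uj tj → ti ≠ tj := by
      intro ti tj ui uj hw1' hw2' huij hdi hdj hai haj
      rintro rfl
      have : 2 ≤ s ti := hs_two ti ui uj huij hdi hdj hai.symm haj.symm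
      rcases honly ti this with rfl | rfl
      · exact hw1' rfl
      · exact hw2' rfl
    have ht12 : t1 ≠ t2 := htdist t1 t2 u1 u2 ht1w1 ht1w2 h12
      (hmemF u1 (by simp)).1 (hmemF u2 (by simp)).1 hu1t1 hu2t2
    have ht13 : t1 ≠ t3 := htdist t1 t3 u1 u3 ht1w1 ht1w2 h13
      (hmemF u1 (by simp)).1 (hmemF u3 (by simp)).1 hu1t1 hu3t3
    have ht23 : t2 ≠ t3 := htdist t2 t3 u2 u3 ht2w1 ht2w2 h23
      (hmemF u2 (by simp)).1 (hmemF u3 (by simp)).1 hu2t2 hu3t3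
    have hut : ∀ u t, u ∈ ({u1, u2, u3} : Finset (Fin (8*k+5))) → G.degree t ≠ 3 → u ≠ t := by
      intro u t hu ht
      rintro rfl
      exact ht (hmemF u hu).1
    have hsub6 : ({u1, u2, u3, t1, t2, t3} : Finset (Fin (8*k+5))) ⊆ G.neighborFinset w1 := by
      intro t ht
      rw [mem_neighborFinset]
      simp only [Finset.mem_insert, Finset.mem_singleton] at ht
      rcases ht with rfl | rfl | rfl | rfl | rfl | rfl
      · exact ((hmemF _ (by simp)).2).symm
      · exact ((hmemF _ (by simp)).2).symm
      · exact ((hmemF _ (by simp)).2).symm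
      · exact hw1t1
      · exact hw1t2
      · exact hw1t3
    have hcard6 : ({u1, u2, u3, t1, t2, t3} : Finset (Fin (8*k+5))).card = 6 := by
      rw [Finset.card_insert_of_notMem (by
        simp only [Finset.mem_insert, Finset.mem_singleton]
        push_neg
        exact ⟨h12, h13, hut u1 t1 (by simp) ht1d, hut u1 t2 (by simp) ht2d,
          hut u1 t3 (by simp) ht3d⟩)]
      rw [Finset.card_insert_of_notMem (by
        simp only [Finset.mem_insert, Finset.mem_singleton]
        push_neg
        exact ⟨h23, hut u2 t1 (by simp) ht1d, hut u2 t2 (by simp) ht2d,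
          hut u2 t3 (by simp) ht3d⟩)]
      rw [Finset.card_insert_of_notMem (by
        simp only [Finset.mem_insert, Finset.mem_singleton]
        push_neg
        exact ⟨hut u3 t1 (by simp) ht1d, hut u3 t2 (by simp) ht2d, hut u3 t3 (by simp) ht3d⟩)]
      rw [hcard3 t1 t2 t3 ht12 ht13 ht23]
    have := Finset.card_le_card hsub6
    rw [hcard6, show (G.neighborFinset w1).card = G.degree w1 from rfl, hdw1] at this
    omega

  have hno6 : ∀ x ∈ B, G.degree x ≤ 5 := by
    intro x hx
    have := hc5 x hx
    have := hs1 x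
    omega
  set H : Finset (Fin (8*k+5)) := B.filter (fun x => G.degree x = 5) with hH
  set P : Finset (Fin (8*k+5)) := B.filter (fun x => G.degree x = 4 ∧ s x = 0) with hP
  have hHmem : ∀ x ∈ H, G.degree x = 5 := by
    intro x hx; rw [hH, Finset.mem_filter] at hx; exact hx.2
  have hPmem : ∀ x ∈ P, G.degree x = 4 ∧ s x = 0 := by
    intro x hx; rw [hP, Finset.mem_filter] at hx; exact hx.2
  have hPmem' : ∀ x, G.degree x = 4 → s x = 0 → x ∈ P := by
    intro x h1 h2
    rw [hP, Finset.mem_filter]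
    exact ⟨hBmem x (by omega), h1, h2⟩
  have hHcard : H.card ≤ 1 := by
    by_contra hcon
    push_neg at hcon
    obtain ⟨a, ha, b, hb, hab⟩ := Finset.one_lt_card.mp hcon
    have haB : a ∈ B := by rw [hH, Finset.mem_filter] at ha; exact ha.1
    have hbB : b ∈ B := by rw [hH, Finset.mem_filter] at hb; exact hb.1
    have := hsum_subset {a, b} (by
      intro t ht
      rcases Finset.mem_insert.mp ht with rfl | ht
      · exact haB
      · rw [Finset.mem_singleton] at ht; subst ht; exact hbB)
    rw [Finset.sum_pair hab] at this
    have hda := hHmem a ha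
    have hdb := hHmem b hb
    have := hs1 a
    have := hs1 b
    omega
  have hPH : (P.card : ℤ) + ∑ x ∈ H, (5 - (s x:ℤ)) = 5 := by
    have hsplit := Finset.sum_filter_add_sum_filter_not B (fun x => G.degree x = 4)
      (fun x => 4 * (G.degree x:ℤ) - 15 - s x)
    have hBnot : B.filter (fun x => ¬ G.degree x = 4) = H := by
      ext t
      simp only [hH, Finset.mem_filter]
      constructor
      · rintro ⟨h1, h2⟩
        have := hBdeg t h1
        have := hno6 t h1
        exact ⟨h1, by omega⟩
      · rintro ⟨h1, h2⟩
        exact ⟨h1, by omega⟩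
    rw [hBnot, hsum_c] at hsplit
    have hB4 : ∑ x ∈ B.filter (fun x => G.degree x = 4), (4 * (G.degree x:ℤ) - 15 - s x)
        = P.card := by
      have he1 : ∀ x ∈ B.filter (fun x => G.degree x = 4),
          (4 * (G.degree x:ℤ) - 15 - s x) = if s x = 0 then 1 else 0 := by
        intro x hx
        rw [Finset.mem_filter] at hx
        have h4 := hx.2
        have := hs1 x
        by_cases h0 : s x = 0
        · rw [if_pos h0, h4, h0]
          norm_num
        · rw [if_neg h0]
          have h1' : s x = 1 := by omega
          rw [h4, h1']
          norm_num
      rw [Finset.sum_congr rfl he1, ← Finset.sum_filter, Finset.filter_filter, ← hP]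
      simp
    rw [hB4] at hsplit
    have hHsum : ∑ x ∈ H, (4 * (G.degree x:ℤ) - 15 - s x) = ∑ x ∈ H, (5 - (s x:ℤ)) := by
      apply Finset.sum_congr rfl
      intro x hx
      rw [hHmem x hx]
      norm_num
    rw [hHsum] at hsplit
    linarith [hsplit]


  have hcard5le : ∀ a b c d e : Fin (8*k+5), ({a,b,c,d,e} : Finset (Fin (8*k+5))).card ≤ 5 := by
    intro a b c d e
    have h1 := List.toFinset_card_le (α := Fin (8*k+5)) [a,b,c,d,e]
    simpa using h1
  have hN4 : ∀ x a b c d : Fin (8*k+5), G.degree x = 4 →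
      G.Adj x a → G.Adj x b → G.Adj x c → G.Adj x d →
      a ≠ b → a ≠ c → a ≠ d → b ≠ c → b ≠ d → c ≠ d →
      ∀ t, G.Adj x t → t = a ∨ t = b ∨ t = c ∨ t = d := by
    intro x a b c d hx4 h1 h2 h3' h4 n1 n2 n3 n4 n5 n6 t ht
    have hsub : ({a, b, c, d} : Finset (Fin (8*k+5))) ⊆ G.neighborFinset x := by
      intro w hw
      rw [mem_neighborFinset]
      simp only [Finset.mem_insert, Finset.mem_singleton] at hw
      rcases hw with rfl | rfl | rfl | rfl
      · exact h1
      · exact h2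
      · exact h3'
      · exact h4
    have heq : ({a, b, c, d} : Finset (Fin (8*k+5))) = G.neighborFinset x := by
      apply Finset.eq_of_subset_of_card_le hsub
      rw [show (G.neighborFinset x).card = G.degree x from rfl, hx4,
        hcard4 a b c d n1 n2 n3 n4 n5 n6]
    have : t ∈ G.neighborFinset x := by rw [mem_neighborFinset]; exact ht
    rw [← heq] at this
    simpa using this
  have hK4p : ∀ x p, G.degree x = 4 → s x = 1 → G.Adj x p → G.degree p ≠ 3 → s p = 0 →
      ∃ u y z, G.degree u = 3 ∧
        G.neighborFinset u = {x, y, z} ∧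
        (∀ t, G.Adj x t → t = u ∨ t = y ∨ t = z ∨ t = p) ∧
        G.Adj u x ∧ G.Adj u y ∧ G.Adj u z ∧ G.Adj x y ∧ G.Adj x z ∧ G.Adj y z ∧
        G.degree y ≠ 3 ∧ G.degree z ≠ 3 ∧
        y ≠ z ∧ u ≠ y ∧ u ≠ z ∧ u ≠ x ∧ x ≠ y ∧ x ≠ z ∧
        p ≠ u ∧ p ≠ y ∧ p ≠ z ∧ p ≠ x := by
    intro x p hx4 hsx hxp hp3 hsp
    have hcard1 : ((G.neighborFinset x).filter (fun u => G.degree u = 3)).card = 1 := by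
      have hsdef : s x = ((G.neighborFinset x).filter (fun u => G.degree u = 3)).card := by
        simp only [hs]
      omega
    obtain ⟨u, hu⟩ := Finset.card_eq_one.mp hcard1
    have humem : u ∈ (G.neighborFinset x).filter (fun w => G.degree w = 3) := by rw [hu]; simp
    rw [Finset.mem_filter, mem_neighborFinset] at humem
    obtain ⟨hxu, hu3⟩ := humem
    obtain ⟨y, z, hyz, hxy', hxz', hNu, huy, huz, haxy, haxz, hayz⟩ := htriple u x hu3 hxu.symm
    have hyne3 : G.degree y ≠ 3 := hindep u y hu3 huy
    have hzne3 : G.degree z ≠ 3 := hindep u z hu3 huz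
    have hpu : p ≠ u := by rintro rfl; exact hp3 hu3
    have hpy : p ≠ y := by
      rintro rfl
      have := hs_mem p u hu3 huy.symm
      omega
    have hpz : p ≠ z := by
      rintro rfl
      have := hs_mem p u hu3 huz.symm
      omega
    have hpx : p ≠ x := hxp.ne'
    have hNx : ∀ t, G.Adj x t → t = u ∨ t = y ∨ t = z ∨ t = p := by
      intro t ht
      have hsub : ({u, y, z, p} : Finset (Fin (8*k+5))) ⊆ G.neighborFinset x := by
        intro w hw
        rw [mem_neighborFinset]
        simp only [Finset.mem_insert, Finset.mem_singleton] at hw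
        rcases hw with rfl | rfl | rfl | rfl
        · exact hxu
        · exact haxy
        · exact haxz
        · exact hxp
      have heq : ({u, y, z, p} : Finset (Fin (8*k+5))) = G.neighborFinset x := by
        apply Finset.eq_of_subset_of_card_le hsub
        rw [show (G.neighborFinset x).card = G.degree x from rfl, hx4,
          hcard4 u y z p huy.ne huz.ne (Ne.symm hpu) hyz (Ne.symm hpy) (Ne.symm hpz)]
      have : t ∈ G.neighborFinset x := by rw [mem_neighborFinset]; exact ht
      rw [← heq] at this
      simpa using this
    exact ⟨u, y, z, hu3, hNu, hNx, hxu.symm, huy, huz, haxy, haxz, hayz, hyne3, hzne3,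
      hyz, huy.ne, huz.ne, hxu.ne', hxy', hxz', hpu, hpy, hpz, hpx⟩

  have hN3 : ∀ u a b c : Fin (8*k+5), G.degree u = 3 →
      G.Adj u a → G.Adj u b → G.Adj u c → a ≠ b → a ≠ c → b ≠ c →
      ∀ t, G.Adj u t → t = a ∨ t = b ∨ t = c := by
    intro u a b c hu3 h1 h2 h3' n1 n2 n3 t ht
    have hsub : ({a, b, c} : Finset (Fin (8*k+5))) ⊆ G.neighborFinset u := by
      intro w hw
      rw [mem_neighborFinset]
      simp only [Finset.mem_insert, Finset.mem_singleton] at hw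
      rcases hw with rfl | rfl | rfl
      · exact h1
      · exact h2
      · exact h3'
    have heq : ({a, b, c} : Finset (Fin (8*k+5))) = G.neighborFinset u := by
      apply Finset.eq_of_subset_of_card_le hsub
      rw [show (G.neighborFinset u).card = G.degree u from rfl, hu3, hcard3 a b c n1 n2 n3]
    have : t ∈ G.neighborFinset u := by rw [mem_neighborFinset]; exact ht
    rw [← heq] at this
    simpa using this
  have caseA : ∀ p u x y z : Fin (8*k+5), G.degree p = 4 → s p = 0 →
      G.degree u = 3 → G.degree x = 4 → G.degree y = 4 → G.degree z = 4 →
      G.Adj p x → G.Adj p y → G.Adj p z →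
      G.Adj u x → G.Adj u y → G.Adj u z →
      G.Adj x y → G.Adj x z → G.Adj y z →
      x ≠ y → x ≠ z → y ≠ z → False := by
    intro p u x y z hp4 hsp hu3 hx4 hy4 hz4 hpx hpy hpz hux huy huz hxy hxz hyz nxy nxz nyz
    have hpu : p ≠ u := by rintro rfl; omega
    have hnux : u ≠ x := hux.ne
    have hnuy : u ≠ y := huy.ne
    have hnuz : u ≠ z := huz.ne
    have hnpx : p ≠ x := hpx.ne
    have hnpy : p ≠ y := hpy.ne
    have hnpz : p ≠ z := hpz.ne
    have hNu := hN3 u x y z hu3 hux huy huz nxy nxz nyz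
    have hNx := hN4 x u y z p hx4 hux.symm hxy hxz hpx.symm hnuy hnuz (Ne.symm hpu)
      nyz (Ne.symm hnpy) (Ne.symm hnpz)
    have hNy := hN4 y u x z p hy4 huy.symm hxy.symm hyz hpy.symm hnux hnuz (Ne.symm hpu)
      nxz (Ne.symm hnpx) (Ne.symm hnpz)
    have hNz := hN4 z u x y p hz4 huz.symm hxz.symm hyz.symm hpz.symm hnux hnuy (Ne.symm hpu)
      nxy (Ne.symm hnpx) (Ne.symm hnpy)
    have hsubp : ({x, y, z} : Finset (Fin (8*k+5))) ⊆ G.neighborFinset p := by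
      intro t ht
      rw [mem_neighborFinset]
      simp only [Finset.mem_insert, Finset.mem_singleton] at ht
      rcases ht with rfl | rfl | rfl
      · exact hpx
      · exact hpy
      · exact hpz
    have hScard : (G.neighborFinset p \ {x, y, z}).card = 1 := by
      rw [Finset.card_sdiff_of_subset hsubp, show (G.neighborFinset p).card = G.degree p from rfl,
        hp4, hcard3 x y z nxy nxz nyz]
    refine cut_lemma h3 (G.neighborFinset p \ {x, y, z}) (by omega) {u, x, y, z, p} ?_ u
      (by simp) ?_ ?_
    · intro d hd t ht
      rw [Finset.mem_union]
      simp only [Finset.mem_insert, Finset.mem_singleton] at hd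
      rcases hd with rfl | rfl | rfl | rfl | rfl
      · rcases hNu t ht with rfl | rfl | rfl
        · exact Or.inl (by simp)
        · exact Or.inl (by simp)
        · exact Or.inl (by simp)
      · rcases hNx t ht with rfl | rfl | rfl | rfl
        · exact Or.inl (by simp)
        · exact Or.inl (by simp)
        · exact Or.inl (by simp)
        · exact Or.inl (by simp)
      · rcases hNy t ht with rfl | rfl | rfl | rfl
        · exact Or.inl (by simp)
        · exact Or.inl (by simp)
        · exact Or.inl (by simp)
        · exact Or.inl (by simp)
      · rcases hNz t ht with rfl | rfl | rfl | rfl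
        · exact Or.inl (by simp)
        · exact Or.inl (by simp)
        · exact Or.inl (by simp)
        · exact Or.inl (by simp)
      · by_cases hmem : t ∈ ({x, y, z} : Finset (Fin (8*k+5)))
        · simp only [Finset.mem_insert, Finset.mem_singleton] at hmem
          rcases hmem with rfl | rfl | rfl
          · exact Or.inl (by simp)
          · exact Or.inl (by simp)
          · exact Or.inl (by simp)
        · refine Or.inr (Finset.mem_sdiff.mpr ⟨?_, hmem⟩)
          rw [mem_neighborFinset]; exact ht
    · rw [Finset.mem_sdiff]
      push_neg
      intro hu'
      exfalso
      rw [mem_neighborFinset] at hu'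
      have := hs_mem p u hu3 hu'
      omega
    · have hc1 := hcard5le u x y z p
      have := Finset.card_union_le ({u, x, y, z, p} : Finset (Fin (8*k+5)))
        (G.neighborFinset p \ {x, y, z})
      omega
  -- main case analysis on H
  have hHcases : H = ∅ ∨ ∃ w, H = {w} := by
    rcases Nat.le_one_iff_eq_zero_or_eq_one.mp hHcard with h0 | h1
    · exact Or.inl (Finset.card_eq_zero.mp h0)
    · exact Or.inr (Finset.card_eq_one.mp h1)
  rcases hHcases with hHe | ⟨w, hHw⟩
  · -- Case III : no degree-5 vertices, five specials
    have hdeg4B : ∀ x ∈ B, G.degree x = 4 := by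
      intro x hx
      have h1 := hBdeg x hx
      have h2 := hno6 x hx
      rcases Nat.eq_or_lt_of_le h2 with h5 | h5
      · exfalso
        have : x ∈ H := by rw [hH, Finset.mem_filter]; exact ⟨hx, h5⟩
        rw [hHe] at this
        simp at this
      · omega
    have hP5 : P.card = 5 := by
      rw [hHe] at hPH
      simp at hPH
      exact_mod_cast hPH
    have hQsubP : ∀ x, G.Adj x x → False := fun x hx => G.irrefl hx
    have hCP : ∀ p ∈ P, ∀ (C : Finset (Fin (8*k+5))), (∀ x ∈ C, G.Adj p x) →
        (∀ x ∈ C, ∃ y ∈ C, ∃ z ∈ C, y ≠ z ∧ G.Adj x y ∧ G.Adj x z) → ∀ x ∈ C, x ∈ P := by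
      intro p hpP C h1C hstr x hxC
      obtain ⟨hp4, hsp⟩ := hPmem p hpP
      have hpx : G.Adj p x := h1C x hxC
      have hCA : ∀ t ∈ C, G.degree t ≠ 3 := by
        intro t ht h3'
        have := hs_mem p t h3' (h1C t ht)
        omega
      have hx4 : G.degree x = 4 := hdeg4B x (hBmem x (hCA x hxC))
      rcases Nat.le_one_iff_eq_zero_or_eq_one.mp (hs1 x) with h0 | h1
      · exact hPmem' x hx4 h0
      exfalso
      obtain ⟨u, y, z, hu3, hNu, hNx, hux, huy, huz, haxy, haxz, hayz, hy3, hz3,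
        hyz, huny, hunz, hunx, hxny, hxnz, hqu, hqy, hqz, hqx⟩ :=
        hK4p x p hx4 h1 hpx.symm (by omega) hsp
      obtain ⟨c1, hc1C, c2, hc2C, hc12, ha1, ha2⟩ := hstr x hxC
      have hcy : ∀ c, c ∈ C → G.Adj x c → c = y ∨ c = z := by
        intro c hcC hxc
        rcases hNx c hxc with rfl | rfl | rfl | rfl
        · exact absurd hu3 (hCA _ hcC)
        · exact Or.inl rfl
        · exact Or.inr rfl
        · exact absurd (h1C _ hcC) (G.irrefl)
      have hyzC : y ∈ C ∧ z ∈ C := by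
        rcases hcy c1 hc1C ha1 with rfl | rfl <;> rcases hcy c2 hc2C ha2 with rfl | rfl
        · exact absurd rfl hc12
        · exact ⟨hc1C, hc2C⟩
        · exact ⟨hc2C, hc1C⟩
        · exact absurd rfl hc12
      have hpy : G.Adj p y := h1C y hyzC.1
      have hpz : G.Adj p z := h1C z hyzC.2
      have hy4 : G.degree y = 4 := hdeg4B y (hBmem y hy3)
      have hz4 : G.degree z = 4 := hdeg4B z (hBmem z hz3)
      exact caseA p u x y z hp4 hsp hu3 hx4 hy4 hz4 hpx hpy hpz hux huy huz
        haxy haxz hayz hxny hxnz hyz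
    have hP3 : ∀ p ∈ P, 3 ≤ (G.neighborFinset p ∩ P).card := by
      intro p hpP
      obtain ⟨C, h1C, h2C, hstr⟩ := cyc p
      have hsub : C ⊆ G.neighborFinset p ∩ P := by
        intro t ht
        rw [Finset.mem_inter, mem_neighborFinset]
        exact ⟨h1C t ht, hCP p hpP C h1C hstr t ht⟩
      exact le_trans h2C (Finset.card_le_card hsub)
    set Q := P.filter (fun q => ¬ (G.neighborFinset q ⊆ P)) with hQdef
    have hQP : ∀ q ∈ Q, q ∈ P := by
      intro q hq; rw [hQdef, Finset.mem_filter] at hq; exact hq.1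
    have hiq3 : ∀ q ∈ Q, (G.neighborFinset q ∩ P).card = 3 := by
      intro q hqQ
      have hqP := hQP q hqQ
      have hqns : ¬ (G.neighborFinset q ⊆ P) := by
        rw [hQdef, Finset.mem_filter] at hqQ; exact hqQ.2
      have hge := hP3 q hqP
      obtain ⟨t0, ht0N, ht0P⟩ := Finset.not_subset.mp hqns
      have hss : G.neighborFinset q ∩ P ⊂ G.neighborFinset q :=
        ⟨Finset.inter_subset_left, fun hsub => ht0P (Finset.mem_inter.mp (hsub ht0N)).2⟩
      have hlt := Finset.card_lt_card hss
      have hdq : (G.neighborFinset q).card = 4 := (hPmem q hqP).1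
      omega
    have hout1 : ∀ q ∈ Q, (G.neighborFinset q \ P).card = 1 := by
      intro q hqQ
      have h1 := Finset.card_sdiff_add_card_inter (G.neighborFinset q) P
      have h2 := hiq3 q hqQ
      have hdq : (G.neighborFinset q).card = 4 := (hPmem q (hQP q hqQ)).1
      omega
    have hpartner : ∀ q ∈ Q, ∃ nq, nq ∈ P ∧ nq ≠ q ∧ ¬ G.Adj q nq ∧
        (∀ t ∈ P, t ≠ q → t ≠ nq → G.Adj q t) := by
      intro q hqQ
      have hqP := hQP q hqQ
      have hqnm : q ∉ G.neighborFinset q ∩ P := by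
        rw [Finset.mem_inter, mem_neighborFinset]
        rintro ⟨h, -⟩
        exact G.irrefl h
      have h1 : (P ∩ insert q (G.neighborFinset q)).card = 4 := by
        rw [Finset.inter_comm, Finset.insert_inter_of_mem hqP,
          Finset.card_insert_of_notMem hqnm, hiq3 q hqQ]
      have h2 := Finset.card_sdiff_add_card_inter P (insert q (G.neighborFinset q))
      rw [h1, hP5] at h2
      obtain ⟨nq, hnq⟩ := Finset.card_eq_one.mp (by omega :
        (P \ insert q (G.neighborFinset q)).card = 1)
      have hnqmem : nq ∈ P \ insert q (G.neighborFinset q) := by rw [hnq]; simp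
      rw [Finset.mem_sdiff, Finset.mem_insert, mem_neighborFinset] at hnqmem
      push_neg at hnqmem
      refine ⟨nq, hnqmem.1, fun h => hnqmem.2.1 h, fun h => hnqmem.2.2 h, ?_⟩
      intro t htP htq htnq
      have : t ∉ P \ insert q (G.neighborFinset q) := by
        rw [hnq, Finset.mem_singleton]
        exact htnq
      rw [Finset.mem_sdiff] at this
      push_neg at this
      have := this htP
      rw [Finset.mem_insert, mem_neighborFinset] at this
      rcases this with h | h
      · exact absurd h htq
      · exact h
    have hQQ : ∀ q ∈ Q, ∀ nq, nq ∈ P → ¬ G.Adj q nq → nq ≠ q → nq ∈ Q := by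
      intro q hqQ nq hnqP hnadj hne
      rw [hQdef, Finset.mem_filter]
      refine ⟨hnqP, ?_⟩
      intro hsubP
      have hsub2 : G.neighborFinset nq ⊆ P \ {nq, q} := by
        intro t ht
        rw [Finset.mem_sdiff]
        refine ⟨hsubP ht, ?_⟩
        rw [mem_neighborFinset] at ht
        simp only [Finset.mem_insert, Finset.mem_singleton]
        push_neg
        constructor
        · rintro rfl; exact G.irrefl ht
        · rintro rfl; exact hnadj ht.symm
      have hc2 := Finset.card_le_card hsub2
      have hc3 : (P \ {nq, q}).card ≤ 3 := by
        have hsub3 : ({nq, q} : Finset (Fin (8*k+5))) ⊆ P := by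
          intro t ht
          rcases Finset.mem_insert.mp ht with rfl | ht
          · exact hnqP
          · rw [Finset.mem_singleton] at ht; rw [ht]; exact hQP q hqQ
        rw [Finset.card_sdiff_of_subset hsub3, hP5,
          Finset.card_insert_of_notMem (by simpa using hne), Finset.card_singleton]
      have hdq : (G.neighborFinset nq).card = 4 := (hPmem nq hnqP).1
      omega
    by_cases hQle : Q.card ≤ 2
    ·
      obtain ⟨p0, hp0⟩ := Finset.card_pos.mp (by omega : 0 < P.card)
      have hScard : (Q.biUnion (fun q => G.neighborFinset q \ P)).card ≤ 2 := by
        refine le_trans Finset.card_biUnion_le ?_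
        calc ∑ q ∈ Q, (G.neighborFinset q \ P).card = ∑ q ∈ Q, 1 :=
              Finset.sum_congr rfl (fun q hq => hout1 q hq)
          _ = Q.card := by simp
          _ ≤ 2 := hQle
      refine cut_lemma h3 (Q.biUnion (fun q => G.neighborFinset q \ P)) hScard P ?_ p0 hp0 ?_ ?_
      · intro d hd t ht
        rw [Finset.mem_union]
        by_cases htP : t ∈ P
        · exact Or.inl htP
        · have hdQ : d ∈ Q := by
            rw [hQdef, Finset.mem_filter]
            refine ⟨hd, fun hsub => htP (hsub (by rw [mem_neighborFinset]; exact ht))⟩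
          refine Or.inr (Finset.mem_biUnion.mpr ⟨d, hdQ, ?_⟩)
          rw [Finset.mem_sdiff, mem_neighborFinset]
          exact ⟨ht, htP⟩
      · intro hmem
        rw [Finset.mem_biUnion] at hmem
        obtain ⟨q, hq, hmem⟩ := hmem
        rw [Finset.mem_sdiff] at hmem
        exact hmem.2 hp0
      · have h1 := Finset.card_union_le P (Q.biUnion (fun q => G.neighborFinset q \ P))
        omega
    ·
      push_neg at hQle
      obtain ⟨q1, hq1Q⟩ := Finset.card_pos.mp (by omega : 0 < Q.card)
      have hq1P := hQP q1 hq1Q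
      obtain ⟨n1, hn1P, hn1q1, hnadj1, hfull1⟩ := hpartner q1 hq1Q
      have hn1Q : n1 ∈ Q := hQQ q1 hq1Q n1 hn1P hnadj1 hn1q1
      obtain ⟨q, hqQ', hqq1, hqn1⟩ : ∃ q, q ∈ Q ∧ q ≠ q1 ∧ q ≠ n1 := by
        have hle := Finset.card_le_card_sdiff_add_card (s := Q)
          (t := ({q1, n1} : Finset (Fin (8*k+5))))
        have h2 : ({q1, n1} : Finset (Fin (8*k+5))).card ≤ 2 :=
          le_trans (Finset.card_insert_le _ _) (by simp)
        obtain ⟨q, hq⟩ := Finset.card_pos.mp (by omega : 0 < (Q \ {q1, n1}).card)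
        rw [Finset.mem_sdiff] at hq
        simp only [Finset.mem_insert, Finset.mem_singleton] at hq
        push_neg at hq
        exact ⟨q, hq.1, hq.2.1, hq.2.2⟩
      have hqP : q ∈ P := hQP q hqQ'
      obtain ⟨nq, hnqP, hnqq, hnadjq, hfullq⟩ := hpartner q hqQ'
      have hnq_ne_q1 : nq ≠ q1 := by
        intro heq
        refine hnadjq ?_
        rw [heq]
        exact (hfull1 q hqP hqq1 hqn1).symm
      have hnq_ne_n1 : nq ≠ n1 := by
        intro heq
        obtain ⟨n1', hn1'P, hn1'n1, hnadjn1, hfulln1⟩ := hpartner n1 hn1Q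
        by_cases hq1n1' : q1 = n1'
        · refine hnadjq ?_
          rw [heq]
          exact (hfulln1 q hqP hqn1 (by rw [← hq1n1']; exact hqq1)).symm
        · exact hnadj1 (hfulln1 q1 hq1P hn1q1.symm hq1n1').symm
      have hsub4 : ({q1, n1, q, nq} : Finset (Fin (8*k+5))) ⊆ P := by
        intro t ht
        simp only [Finset.mem_insert, Finset.mem_singleton] at ht
        rcases ht with rfl | rfl | rfl | rfl
        · exact hq1P
        · exact hn1P
        · exact hqP
        · exact hnqP
      have hc4 : ({q1, n1, q, nq} : Finset (Fin (8*k+5))).card = 4 :=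
        hcard4 q1 n1 q nq (Ne.symm hn1q1) (Ne.symm hqq1) (Ne.symm hnq_ne_q1)
          (Ne.symm hqn1) (Ne.symm hnq_ne_n1) (Ne.symm hnqq)
      have hr1 : (P \ {q1, n1, q, nq}).card = 1 := by
        rw [Finset.card_sdiff_of_subset hsub4, hP5, hc4]
      obtain ⟨r, hrset⟩ := Finset.card_eq_one.mp hr1
      have hrmem : r ∈ P \ {q1, n1, q, nq} := by rw [hrset]; simp
      rw [Finset.mem_sdiff] at hrmem
      simp only [Finset.mem_insert, Finset.mem_singleton] at hrmem
      push_neg at hrmem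
      have hPenum : ∀ t ∈ P, t = q1 ∨ t = n1 ∨ t = q ∨ t = nq ∨ t = r := by
        intro t htP
        by_cases hmem : t ∈ ({q1, n1, q, nq} : Finset (Fin (8*k+5)))
        · simp only [Finset.mem_insert, Finset.mem_singleton] at hmem
          rcases hmem with h | h | h | h
          · exact Or.inl h
          · exact Or.inr (Or.inl h)
          · exact Or.inr (Or.inr (Or.inl h))
          · exact Or.inr (Or.inr (Or.inr (Or.inl h)))
        · have hmem2 : t ∈ P \ {q1, n1, q, nq} := Finset.mem_sdiff.mpr ⟨htP, hmem⟩
          rw [hrset, Finset.mem_singleton] at hmem2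
          exact Or.inr (Or.inr (Or.inr (Or.inr hmem2)))
      obtain ⟨C, h1C, h2C, hstr⟩ := cyc q
      have hCsub : C ⊆ ({q1, n1, r} : Finset (Fin (8*k+5))) := by
        intro t htC
        have htP : t ∈ P := hCP q hqP C h1C hstr t htC
        have hadj : G.Adj q t := h1C t htC
        rcases hPenum t htP with rfl | rfl | rfl | rfl | rfl
        · simp
        · simp
        · exact absurd hadj (G.irrefl)
        · exact absurd hadj hnadjq
        · simp
      have hc3' : ({q1, n1, r} : Finset (Fin (8*k+5))).card = 3 :=
        hcard3 q1 n1 r (Ne.symm hn1q1) (fun h => hrmem.2.1 h.symm) (fun h => hrmem.2.2.1 h.symm)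
      have hCeq : C = ({q1, n1, r} : Finset (Fin (8*k+5))) :=
        Finset.eq_of_subset_of_card_le hCsub (by omega)
      have hq1C : q1 ∈ C := by rw [hCeq]; simp
      obtain ⟨y, hyC, z, hzC, hyzne, hay, haz⟩ := hstr q1 hq1C
      have hymem : y = n1 ∨ y = r := by
        rw [hCeq] at hyC
        simp only [Finset.mem_insert, Finset.mem_singleton] at hyC
        rcases hyC with rfl | h | h
        · exact absurd hay (G.irrefl)
        · exact Or.inl h
        · exact Or.inr h
      have hzmem : z = n1 ∨ z = r := by
        rw [hCeq] at hzC
        simp only [Finset.mem_insert, Finset.mem_singleton] at hzC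
        rcases hzC with rfl | h | h
        · exact absurd haz (G.irrefl)
        · exact Or.inl h
        · exact Or.inr h
      rcases hymem with rfl | rfl
      · exact hnadj1 hay
      · rcases hzmem with rfl | rfl
        · exact hnadj1 haz
        · exact hyzne rfl
  · -- Case H = {w}
    have hwB : w ∈ B := by
      have : w ∈ H := by rw [hHw]; simp
      rw [hH, Finset.mem_filter] at this; exact this.1
    have hw5 : G.degree w = 5 := by
      have : w ∈ H := by rw [hHw]; simp
      exact hHmem w this
    have hdeg4B : ∀ x ∈ B, x ≠ w → G.degree x = 4 := by
      intro x hx hxw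
      have h1 := hBdeg x hx
      have h2 := hno6 x hx
      rcases Nat.eq_or_lt_of_le h2 with h5 | h5
      · exfalso
        have : x ∈ H := by rw [hH, Finset.mem_filter]; exact ⟨hx, h5⟩
        rw [hHw] at this
        simp at this
        exact hxw this
      · omega
    have hPsw : P.card = s w := by
      rw [hHw] at hPH
      rw [Finset.sum_singleton] at hPH
      have := hs1 w
      omega
    have caseB : ∀ p u x y : Fin (8*k+5), G.degree p = 4 → s p = 0 →
        G.degree u = 3 → G.degree x = 4 → G.degree y = 4 →
        G.Adj p x → G.Adj p y → G.Adj p w →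
        G.Adj u x → G.Adj u y → G.Adj u w →
        G.Adj x y → G.Adj x w → G.Adj y w → x ≠ y → False := by
      intro p u x y hp4 hsp hu3 hx4 hy4 hpx hpy hpw hux huy huw hxy hxw hyw nxy
      have hpu : p ≠ u := by rintro rfl; omega
      have hnux : u ≠ x := hux.ne
      have hnuy : u ≠ y := huy.ne
      have hnuw : u ≠ w := huw.ne
      have hnpx : p ≠ x := hpx.ne
      have hnpy : p ≠ y := hpy.ne
      have hnpw : p ≠ w := hpw.ne
      have hnxw : x ≠ w := by rintro rfl; omega
      have hnyw : y ≠ w := by rintro rfl; omega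
      have hNu := hN3 u x y w hu3 hux huy huw nxy hnxw hnyw
      have hNx := hN4 x u y w p hx4 hux.symm hxy hxw hpx.symm hnuy hnuw (Ne.symm hpu)
        hnyw (Ne.symm hnpy) (Ne.symm hnpw)
      have hNy := hN4 y u x w p hy4 huy.symm hxy.symm hyw hpy.symm hnux hnuw (Ne.symm hpu)
        hnxw (Ne.symm hnpx) (Ne.symm hnpw)
      have hsubw : ({u, x, y, p} : Finset (Fin (8*k+5))) ⊆ G.neighborFinset w := by
        intro t ht
        rw [mem_neighborFinset]
        simp only [Finset.mem_insert, Finset.mem_singleton] at ht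
        rcases ht with rfl | rfl | rfl | rfl
        · exact huw.symm
        · exact hxw.symm
        · exact hyw.symm
        · exact hpw.symm
      have hsubp : ({x, y, w} : Finset (Fin (8*k+5))) ⊆ G.neighborFinset p := by
        intro t ht
        rw [mem_neighborFinset]
        simp only [Finset.mem_insert, Finset.mem_singleton] at ht
        rcases ht with rfl | rfl | rfl
        · exact hpx
        · exact hpy
        · exact hpw
      have hS1 : (G.neighborFinset w \ {u, x, y, p}).card = 1 := by
        rw [Finset.card_sdiff_of_subset hsubw, show (G.neighborFinset w).card = G.degree w from rfl,
          hw5, hcard4 u x y p hnux hnuy (Ne.symm hpu) nxy (Ne.symm hnpx) (Ne.symm hnpy)]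
      have hS2 : (G.neighborFinset p \ {x, y, w}).card = 1 := by
        rw [Finset.card_sdiff_of_subset hsubp, show (G.neighborFinset p).card = G.degree p from rfl,
          hp4, hcard3 x y w nxy hnxw hnyw]
      have hSle : ((G.neighborFinset w \ {u, x, y, p}) ∪ (G.neighborFinset p \ {x, y, w})).card ≤ 2 := by
        have := Finset.card_union_le (G.neighborFinset w \ {u, x, y, p})
          (G.neighborFinset p \ {x, y, w})
        omega
      refine cut_lemma h3 ((G.neighborFinset w \ {u, x, y, p}) ∪ (G.neighborFinset p \ {x, y, w}))
        hSle {u, x, y, w, p} ?_ u (by simp) ?_ ?_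
      · intro d hd t ht
        rw [Finset.mem_union]
        simp only [Finset.mem_insert, Finset.mem_singleton] at hd
        rcases hd with rfl | rfl | rfl | rfl | rfl
        · rcases hNu t ht with rfl | rfl | rfl
          · exact Or.inl (by simp)
          · exact Or.inl (by simp)
          · exact Or.inl (by simp)
        · rcases hNx t ht with rfl | rfl | rfl | rfl
          · exact Or.inl (by simp)
          · exact Or.inl (by simp)
          · exact Or.inl (by simp)
          · exact Or.inl (by simp)
        · rcases hNy t ht with rfl | rfl | rfl | rfl
          · exact Or.inl (by simp)
          · exact Or.inl (by simp)
          · exact Or.inl (by simp)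
          · exact Or.inl (by simp)
        · by_cases hmem : t ∈ ({u, x, y, p} : Finset (Fin (8*k+5)))
          · simp only [Finset.mem_insert, Finset.mem_singleton] at hmem
            rcases hmem with rfl | rfl | rfl | rfl
            · exact Or.inl (by simp)
            · exact Or.inl (by simp)
            · exact Or.inl (by simp)
            · exact Or.inl (by simp)
          · refine Or.inr (Finset.mem_union_left _ (Finset.mem_sdiff.mpr ⟨?_, hmem⟩))
            rw [mem_neighborFinset]; exact ht
        · by_cases hmem : t ∈ ({x, y, w} : Finset (Fin (8*k+5)))
          · simp only [Finset.mem_insert, Finset.mem_singleton] at hmem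
            rcases hmem with rfl | rfl | rfl
            · exact Or.inl (by simp)
            · exact Or.inl (by simp)
            · exact Or.inl (by simp)
          · refine Or.inr (Finset.mem_union_right _ (Finset.mem_sdiff.mpr ⟨?_, hmem⟩))
            rw [mem_neighborFinset]; exact ht
      · rw [Finset.mem_union]
        push_neg
        constructor
        · rw [Finset.mem_sdiff]
          push_neg
          intro _
          simp
        · rw [Finset.mem_sdiff]
          push_neg
          intro hu'
          exfalso
          rw [mem_neighborFinset] at hu'
          have := hs_mem p u hu3 hu'
          omega
      · have hc1 := hcard5le u x y w p
        have := Finset.card_union_le ({u, x, y, w, p} : Finset (Fin (8*k+5)))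
          ((G.neighborFinset w \ {u, x, y, p}) ∪ (G.neighborFinset p \ {x, y, w}))
        omega
    rcases Nat.le_one_iff_eq_zero_or_eq_one.mp (hs1 w) with hsw | hsw
    · -- sigma = 0
      -- sigma = 0 : all degree-4 vertices have s = 1; cycle around w gives a K4+w cut
      have hP0 : ∀ x, G.degree x = 4 → s x = 1 := by
        intro x hx4
        rcases Nat.le_one_iff_eq_zero_or_eq_one.mp (hs1 x) with h0 | h1
        · exfalso
          have hmem := hPmem' x hx4 h0
          have := Finset.card_pos.mpr ⟨x, hmem⟩
          omega
        · exact h1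
      obtain ⟨C, h1C, h2C, hstr⟩ := cyc w
      obtain ⟨x, hxC⟩ := Finset.card_pos.mp (by omega : 0 < C.card)
      have hwx : G.Adj w x := h1C x hxC
      have hnbrB : ∀ t, G.Adj w t → G.degree t = 4 := by
        intro t ht
        have ht3 : G.degree t ≠ 3 := by
          intro h3'
          have := hs_mem w t h3' ht
          omega
        exact hdeg4B t (hBmem t ht3) (by rintro rfl; exact G.irrefl ht)
      have hx4 : G.degree x = 4 := hnbrB x hwx
      have hsx : s x = 1 := hP0 x hx4
      obtain ⟨u, y, z, hu3, hNu, hNx, hux, huy, huz, haxy, haxz, hayz, hy3, hz3,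
        hyz, huny, hunz, hunx, hxny, hxnz, hpu, hpy, hpz, hpx⟩ :=
        hK4p x w hx4 hsx hwx.symm (by omega) hsw
      obtain ⟨c1, hc1C, c2, hc2C, hc12, ha1, ha2⟩ := hstr x hxC
      have hCA : ∀ t ∈ C, G.degree t ≠ 3 := by
        intro t ht h3'
        have := hs_mem w t h3' (h1C t ht)
        omega
      have hcy : ∀ c, c ∈ C → G.Adj x c → c = y ∨ c = z := by
        intro c hcC hxc
        rcases hNx c hxc with rfl | rfl | rfl | rfl
        · exact absurd hu3 (hCA _ hcC)
        · exact Or.inl rfl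
        · exact Or.inr rfl
        · exact absurd (h1C _ hcC) (G.irrefl)
      have hyzC : y ∈ C ∧ z ∈ C := by
        rcases hcy c1 hc1C ha1 with rfl | rfl <;> rcases hcy c2 hc2C ha2 with rfl | rfl
        · exact absurd rfl hc12
        · exact ⟨hc1C, hc2C⟩
        · exact ⟨hc2C, hc1C⟩
        · exact absurd rfl hc12
      have hwy : G.Adj w y := h1C y hyzC.1
      have hwz : G.Adj w z := h1C z hyzC.2
      have hy4 : G.degree y = 4 := hnbrB y hwy
      have hz4 : G.degree z = 4 := hnbrB z hwz
      have hNy := hN4 y u x z w hy4 huy.symm haxy.symm hayz hwy.symm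
        hunx hunz (Ne.symm hpu) hxnz (Ne.symm hpx) (Ne.symm hpz)
      have hNz := hN4 z u x y w hz4 huz.symm haxz.symm hayz.symm hwz.symm
        hunx huny (Ne.symm hpu) hxny (Ne.symm hpx) (Ne.symm hpy)
      have hxyzsub : ({x, y, z} : Finset (Fin (8*k+5))) ⊆ G.neighborFinset w := by
        intro t ht
        rw [mem_neighborFinset]
        simp only [Finset.mem_insert, Finset.mem_singleton] at ht
        rcases ht with rfl | rfl | rfl
        · exact hwx
        · exact hwy
        · exact hwz
      have hScard : (G.neighborFinset w \ {x,y,z}).card = 2 := by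
        rw [Finset.card_sdiff_of_subset hxyzsub, show (G.neighborFinset w).card = G.degree w from rfl,
          hw5, hcard3 x y z hxny hxnz hyz]
      refine cut_lemma h3 (G.neighborFinset w \ {x, y, z}) (by omega) {u, x, y, z, w} ?_ u
        (by simp) ?_ ?_
      · intro d hd t ht
        rw [Finset.mem_union]
        simp only [Finset.mem_insert, Finset.mem_singleton] at hd
        rcases hd with rfl | rfl | rfl | rfl | rfl
        · have hmt : t ∈ G.neighborFinset d := by rw [mem_neighborFinset]; exact ht
          rw [hNu] at hmt
          simp only [Finset.mem_insert, Finset.mem_singleton] at hmt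
          rcases hmt with rfl | rfl | rfl
          · exact Or.inl (by simp)
          · exact Or.inl (by simp)
          · exact Or.inl (by simp)
        · rcases hNx t ht with rfl | rfl | rfl | rfl
          · exact Or.inl (by simp)
          · exact Or.inl (by simp)
          · exact Or.inl (by simp)
          · exact Or.inl (by simp)
        · rcases hNy t ht with rfl | rfl | rfl | rfl
          · exact Or.inl (by simp)
          · exact Or.inl (by simp)
          · exact Or.inl (by simp)
          · exact Or.inl (by simp)
        · rcases hNz t ht with rfl | rfl | rfl | rfl
          · exact Or.inl (by simp)
          · exact Or.inl (by simp)
          · exact Or.inl (by simp)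
          · exact Or.inl (by simp)
        · by_cases hmem : t ∈ ({x, y, z} : Finset (Fin (8*k+5)))
          · simp only [Finset.mem_insert, Finset.mem_singleton] at hmem
            rcases hmem with rfl | rfl | rfl
            · exact Or.inl (by simp)
            · exact Or.inl (by simp)
            · exact Or.inl (by simp)
          · refine Or.inr (Finset.mem_sdiff.mpr ⟨?_, hmem⟩)
            rw [mem_neighborFinset]; exact ht
      · rw [Finset.mem_sdiff]
        push_neg
        intro hu'
        exfalso
        rw [mem_neighborFinset] at hu'
        have := hs_mem w u hu3 hu'
        omega
      · have hc1 := hcard5le u x y z w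
        have := Finset.card_union_le ({u, x, y, z, w} : Finset (Fin (8*k+5)))
          (G.neighborFinset w \ {x, y, z})
        omega
    · -- sigma = 1
      have hP1 : P.card = 1 := by omega
      obtain ⟨p, hPp⟩ := Finset.card_eq_one.mp hP1
      have hpP : p ∈ P := by rw [hPp]; simp
      obtain ⟨hp4, hsp⟩ := hPmem p hpP
      obtain ⟨C, h1C, h2C, hstr⟩ := cyc p
      obtain ⟨x, hxC, hxw⟩ : ∃ x, x ∈ C ∧ x ≠ w := by
        by_contra hcon
        push_neg at hcon
        have hsub : C ⊆ {w} := fun t ht => Finset.mem_singleton.mpr (hcon t ht)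
        have := Finset.card_le_card hsub
        simp at this
        omega
      have hpx : G.Adj p x := h1C x hxC
      have hCA : ∀ t ∈ C, G.degree t ≠ 3 := by
        intro t ht h3'
        have := hs_mem p t h3' (h1C t ht)
        omega
      have hx4 : G.degree x = 4 := hdeg4B x (hBmem x (hCA x hxC)) hxw
      have hsx : s x = 1 := by
        rcases Nat.le_one_iff_eq_zero_or_eq_one.mp (hs1 x) with h0 | h1
        · exfalso
          have hxP := hPmem' x hx4 h0
          rw [hPp, Finset.mem_singleton] at hxP
          subst hxP
          exact G.irrefl hpx
        · exact h1
      obtain ⟨u, y, z, hu3, hNu, hNx, hux, huy, huz, haxy, haxz, hayz, hy3, hz3,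
        hyz, huny, hunz, hunx, hxny, hxnz, hqu, hqy, hqz, hqx⟩ :=
        hK4p x p hx4 hsx hpx.symm (by omega) hsp
      obtain ⟨c1, hc1C, c2, hc2C, hc12, ha1, ha2⟩ := hstr x hxC
      have hcy : ∀ c, c ∈ C → G.Adj x c → c = y ∨ c = z := by
        intro c hcC hxc
        rcases hNx c hxc with rfl | rfl | rfl | rfl
        · exact absurd hu3 (hCA _ hcC)
        · exact Or.inl rfl
        · exact Or.inr rfl
        · exact absurd (h1C _ hcC) (G.irrefl)
      have hyzC : y ∈ C ∧ z ∈ C := by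
        rcases hcy c1 hc1C ha1 with rfl | rfl <;> rcases hcy c2 hc2C ha2 with rfl | rfl
        · exact absurd rfl hc12
        · exact ⟨hc1C, hc2C⟩
        · exact ⟨hc2C, hc1C⟩
        · exact absurd rfl hc12
      have hpy : G.Adj p y := h1C y hyzC.1
      have hpz : G.Adj p z := h1C z hyzC.2
      by_cases hzw : z = w
      · subst hzw
        have hy4 : G.degree y = 4 := hdeg4B y (hBmem y hy3) (fun h => hyz h)
        exact caseB p u x y hp4 hsp hu3 hx4 hy4 hpx hpy hpz hux huy huz haxy haxz hayz hxny
      · by_cases hyw : y = w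
        · subst hyw
          have hz4 : G.degree z = 4 := hdeg4B z (hBmem z hz3) hzw
          exact caseB p u x z hp4 hsp hu3 hx4 hz4 hpx hpz hpy hux huz huy haxz haxy
            hayz.symm hxnz
        · have hy4 : G.degree y = 4 := hdeg4B y (hBmem y hy3) hyw
          have hz4 : G.degree z = 4 := hdeg4B z (hBmem z hz3) hzw
          exact caseA p u x y z hp4 hsp hu3 hx4 hy4 hz4 hpx hpy hpz hux huy huz
            haxy haxz hayz hxny hxnz hyz
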